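/- arXiv:2305.05577 — 3 statements merged into one kernel-verified Lean document; each statement's English description precedes it below -/
import Mathlib

section
/- Let G be a group acting on vector spaces V and W via representations ρ₁ and ρ₂. If F : V → 2^G is a G-equivariant frame (i.e., F(ρ₁(g)X) = g·F(X) for all g, X, with g·F(X) = {gh : h ∈ F(X)}) with F(X) finite and nonempty for all X, then for any function Φ : V → W, the frame average ⟨Φ⟩_F(X) = (1/|F(X)|) Σ_{g ∈ F(X)} ρ₂(g) Φ(ρ₁(g)⁻¹ X) is G-equivariant: ⟨Φ⟩_F(ρ₁(g)X) = ρ₂(g) ⟨Φ⟩_F(X) for all g ∈ G, X ∈ V. -/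
open scoped BigOperators

/-- Frame averaging of `Φ` over the frame `F`, with representations `ρ₁, ρ₂`. -/
noncomputable def frameAvg {G V W : Type*} [Group G]
    [AddCommGroup V] [Module ℝ V] [AddCommGroup W] [Module ℝ W]
    (ρ₁ : G →* (V ≃ₗ[ℝ] V)) (ρ₂ : G →* (W ≃ₗ[ℝ] W))
    (F : V → Finset G) (Φ : V → W) (X : V) : W :=
  ((F X).card : ℝ)⁻¹ • ∑ g ∈ F X, ρ₂ g (Φ ((ρ₁ g)⁻¹ X))

/-- If `F` is a `G`-equivariant frame with finite nonempty values, then the frame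
average of any map `Φ` is `G`-equivariant. -/
theorem frameAvg_equivariant {G V W : Type*} [Group G] [DecidableEq G]
    [AddCommGroup V] [Module ℝ V] [AddCommGroup W] [Module ℝ W]
    (ρ₁ : G →* (V ≃ₗ[ℝ] V)) (ρ₂ : G →* (W ≃ₗ[ℝ] W))
    (F : V → Finset G)
    (hne : ∀ X : V, (F X).Nonempty)
    (hF : ∀ (g : G) (X : V), F (ρ₁ g X) = (F X).image (fun h => g * h))
    (Φ : V → W) :
    ∀ (g : G) (X : V),
      frameAvg ρ₁ ρ₂ F Φ (ρ₁ g X) = ρ₂ g (frameAvg ρ₁ ρ₂ F Φ X) := by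
  intro g X
  have hinj : Function.Injective (fun h : G => g * h) := fun a b h => by
    simpa using h
  simp only [frameAvg, hF g X, Finset.card_image_of_injective _ hinj]
  rw [Finset.sum_image (fun a _ b _ h => hinj h)]
  rw [map_smul, map_sum]
  congr 1
  apply Finset.sum_congr rfl
  intro h _
  have hv : (ρ₁ (g * h))⁻¹ (ρ₁ g X) = (ρ₁ h)⁻¹ X := by
    simp only [map_mul, mul_inv_rev]
    show (ρ₁ h)⁻¹ ((ρ₁ g)⁻¹ (ρ₁ g X)) = _
    congr 1
    exact (ρ₁ g).symm_apply_apply X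
  rw [hv, map_mul]
  rfl
end

section
/- With the same setup, if ρ₂(g) = id_W for all g ∈ G (the invariant case), then the frame average ⟨Φ⟩_F(X) = (1/|F(X)|) Σ_{g ∈ F(X)} Φ(ρ₁(g)⁻¹ X) is G-invariant: ⟨Φ⟩_F(ρ₁(g)X) = ⟨Φ⟩_F(X) for all g ∈ G and X ∈ V. -/
open scoped BigOperators

/-- Frame averaging in the invariant case (`ρ₂(g) = id` for all `g`). -/
noncomputable def frameAvgInv {G V W : Type*} [Group G]
    [AddCommGroup V] [Module ℝ V] [AddCommGroup W] [Module ℝ W]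
    (ρ₁ : G →* (V ≃ₗ[ℝ] V)) (F : V → Finset G) (Φ : V → W) (X : V) : W :=
  ((F X).card : ℝ)⁻¹ • ∑ g ∈ F X, Φ ((ρ₁ g)⁻¹ X)

/-- If `ρ₂` is the trivial representation, the frame average is `G`-invariant. -/
theorem frameAvgInv_invariant {G V W : Type*} [Group G] [DecidableEq G]
    [AddCommGroup V] [Module ℝ V] [AddCommGroup W] [Module ℝ W]
    (ρ₁ : G →* (V ≃ₗ[ℝ] V))
    (F : V → Finset G)
    (hne : ∀ X : V, (F X).Nonempty)
    (hF : ∀ (g : G) (X : V), F (ρ₁ g X) = (F X).image (fun h => g * h))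
    (Φ : V → W) :
    ∀ (g : G) (X : V),
      frameAvgInv ρ₁ F Φ (ρ₁ g X) = frameAvgInv ρ₁ F Φ X := by
  intro g X
  have hinj : Function.Injective (fun h : G => g * h) := fun a b hab => by
    simpa using hab
  unfold frameAvgInv
  rw [hF, Finset.card_image_of_injective _ hinj,
    Finset.sum_image fun a _ b _ hab => hinj hab]
  congr 1
  refine Finset.sum_congr rfl fun h _ => ?_
  congr 1
  have : (ρ₁ (g * h))⁻¹ = (ρ₁ h)⁻¹ * (ρ₁ g)⁻¹ := by
    rw [map_mul, mul_inv_rev]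
  rw [this]
  show ((ρ₁ h)⁻¹ : V ≃ₗ[ℝ] V) ((ρ₁ g)⁻¹ (ρ₁ g X)) = _
  congr 1
  show ((ρ₁ g)⁻¹ * ρ₁ g : V ≃ₗ[ℝ] V) X = X
  rw [inv_mul_cancel]; rfl
end

section
/- The full frame-averaged equivariant prediction using the 8-element PCA frame, ⟨Φ⟩(X) = (1/8) Σ_{U ∈ F(X)} Φ((X − 1tᵀ)U) Uᵀ, is E(3)-equivariant in the rotation part and translation-invariant: for (R,b) ∈ E(3), ⟨Φ⟩(XRᵀ + 1bᵀ) = ⟨Φ⟩(X) Rᵀ. -/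
open Matrix
open scoped BigOperators

/-- The rank-one matrix `1 tᵀ` whose rows all equal `t`. -/
def onesT {n : ℕ} (t : Fin 3 → ℝ) : Matrix (Fin n) (Fin 3) ℝ :=
  Matrix.of fun _ j => t j

/-- The centroid `t = (1/n) Xᵀ 1` of the rows of `X`. -/
noncomputable def centroid {n : ℕ} (X : Matrix (Fin n) (Fin 3) ℝ) : Fin 3 → ℝ :=
  (n : ℝ)⁻¹ • (Xᵀ *ᵥ fun _ => (1 : ℝ))

/-- The covariance matrix `Σ(X) = (X − 1tᵀ)ᵀ (X − 1tᵀ)` of `X` about its centroid. -/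
noncomputable def cov {n : ℕ} (X : Matrix (Fin n) (Fin 3) ℝ) :
    Matrix (Fin 3) (Fin 3) ℝ :=
  (X - onesT (centroid X))ᵀ * (X - onesT (centroid X))

/-- Sign `±1` attached to a Boolean. -/
def signOf (e : Bool) : ℝ := if e then 1 else -1

/-- The frame matrix `[ε₁u₁, ε₂u₂, ε₃u₃]` with columns the signed
eigenvectors. -/
def signedU (u : Fin 3 → (Fin 3 → ℝ)) (ε : Fin 3 → Bool) :
    Matrix (Fin 3) (Fin 3) ℝ :=
  Matrix.of fun i j => signOf (ε j) * u j i

/-- Full frame-averaged equivariant prediction over the 8-element PCA frame. -/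
noncomputable def faEquiv {n : ℕ}
    (Φ : Matrix (Fin n) (Fin 3) ℝ → Matrix (Fin n) (Fin 3) ℝ)
    (u : Fin 3 → (Fin 3 → ℝ)) (X : Matrix (Fin n) (Fin 3) ℝ) :
    Matrix (Fin n) (Fin 3) ℝ :=
  (8 : ℝ)⁻¹ • ∑ ε : Fin 3 → Bool,
    Φ ((X - onesT (centroid X)) * signedU u ε) * (signedU u ε)ᵀ

/- ### Auxiliary lemmas -/

lemma onesT_add {n : ℕ} (a c : Fin 3 → ℝ) :
    onesT (n := n) (a + c) = onesT a + onesT c := by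
  ext i j; simp [onesT]

lemma onesT_mulVec {n : ℕ} (R : Matrix (Fin 3) (Fin 3) ℝ) (a : Fin 3 → ℝ) :
    onesT (n := n) (R *ᵥ a) = onesT a * Rᵀ := by
  ext i j
  simp [onesT, Matrix.mul_apply, mulVec, dotProduct, mul_comm]

lemma centroid_add {n : ℕ} (A B : Matrix (Fin n) (Fin 3) ℝ) :
    centroid (A + B) = centroid A + centroid B := by
  simp [centroid, Matrix.transpose_add, Matrix.add_mulVec, smul_add]

lemma centroid_mul_transpose {n : ℕ} (X : Matrix (Fin n) (Fin 3) ℝ)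
    (R : Matrix (Fin 3) (Fin 3) ℝ) :
    centroid (X * Rᵀ) = R *ᵥ centroid X := by
  simp [centroid, Matrix.transpose_mul, ← Matrix.mulVec_mulVec, Matrix.mulVec_smul]

lemma centroid_onesT {n : ℕ} (hn : 0 < n) (b : Fin 3 → ℝ) :
    centroid (onesT (n := n) b) = b := by
  funext j
  have hn' : (n : ℝ) ≠ 0 := Nat.cast_ne_zero.mpr hn.ne'
  simp [centroid, onesT, mulVec, dotProduct]
  field_simp

lemma centered_transform {n : ℕ} (hn : 0 < n) (X : Matrix (Fin n) (Fin 3) ℝ)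
    (R : Matrix (Fin 3) (Fin 3) ℝ) (b : Fin 3 → ℝ) :
    (X * Rᵀ + onesT b) - onesT (centroid (X * Rᵀ + onesT b))
      = (X - onesT (centroid X)) * Rᵀ := by
  rw [centroid_add, centroid_mul_transpose, centroid_onesT hn, onesT_add,
    onesT_mulVec, Matrix.sub_mul]
  abel

lemma cov_transform {n : ℕ} (hn : 0 < n) (X : Matrix (Fin n) (Fin 3) ℝ)
    (R : Matrix (Fin 3) (Fin 3) ℝ) (hR : Rᵀ * R = 1) (b : Fin 3 → ℝ) :
    cov (X * Rᵀ + onesT b) = R * cov X * Rᵀ := by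
  unfold cov
  rw [centered_transform hn, Matrix.transpose_mul, Matrix.transpose_transpose]
  rw [Matrix.mul_assoc, Matrix.mul_assoc, ← Matrix.mul_assoc (X - onesT (centroid X))ᵀ]

lemma signOf_mul (a c : Bool) : signOf a * signOf c = signOf (a == c) := by
  cases a <;> cases c <;> simp [signOf]

/-- The full frame-averaged equivariant prediction over the 8-element PCA frame
is `E(3)`-equivariant in the rotation part and translation-invariant:
`⟨Φ⟩(XRᵀ + 1bᵀ) = ⟨Φ⟩(X) Rᵀ`. Here `u` is an orthonormal eigenbasis of
`Σ(X)` with decreasing eigenvalues, and `v` any corresponding eigenbasis of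
`Σ(XRᵀ + 1bᵀ)`. -/
theorem faEquiv_E3_equivariant {n : ℕ} (hn : 0 < n)
    (X : Matrix (Fin n) (Fin 3) ℝ)
    (Φ : Matrix (Fin n) (Fin 3) ℝ → Matrix (Fin n) (Fin 3) ℝ)
    (lam : Fin 3 → ℝ) (hlam01 : lam 1 < lam 0) (hlam12 : lam 2 < lam 1)
    (u : Fin 3 → (Fin 3 → ℝ))
    (hortho : ∀ i j, u i ⬝ᵥ u j = if i = j then 1 else 0)
    (heig : ∀ j, cov X *ᵥ u j = lam j • u j)
    (R : Matrix (Fin 3) (Fin 3) ℝ) (hR : Rᵀ * R = 1) (hR' : R * Rᵀ = 1)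
    (b : Fin 3 → ℝ) :
    ∀ v : Fin 3 → (Fin 3 → ℝ),
      (∀ i j, v i ⬝ᵥ v j = if i = j then 1 else 0) →
      (∀ j, cov (X * Rᵀ + onesT b) *ᵥ v j = lam j • v j) →
      faEquiv Φ v (X * Rᵀ + onesT b) = faEquiv Φ u X * Rᵀ := by
  intro v vortho veig
  -- eigenvalues are pairwise distinct
  have hlam : ∀ i j : Fin 3, i ≠ j → lam i ≠ lam j := by
    intro i j
    fin_cases i <;> fin_cases j <;> simp <;> intro _ <;> linarith
  -- the pulled-back eigenvectors
  set w : Fin 3 → (Fin 3 → ℝ) := fun j => Rᵀ *ᵥ v j with hw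
  have hRRt : ∀ x : Fin 3 → ℝ, R *ᵥ (Rᵀ *ᵥ x) = x := by
    intro x; rw [Matrix.mulVec_mulVec, hR', Matrix.one_mulVec]
  have hvw : ∀ j, v j = R *ᵥ w j := fun j => (hRRt (v j)).symm
  -- w j is an eigenvector of cov X with eigenvalue lam j
  have hw_eig : ∀ j, cov X *ᵥ w j = lam j • w j := by
    intro j
    have h1 := veig j
    rw [cov_transform hn X R hR b] at h1
    have h2 : Rᵀ *ᵥ ((R * cov X * Rᵀ) *ᵥ v j) = Rᵀ *ᵥ (lam j • v j) := by rw [h1]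
    rw [Matrix.mulVec_mulVec, Matrix.mulVec_smul] at h2
    calc cov X *ᵥ w j = (cov X * Rᵀ) *ᵥ v j := by rw [← Matrix.mulVec_mulVec]
      _ = (Rᵀ * (R * cov X * Rᵀ)) *ᵥ v j := by
          rw [← Matrix.mul_assoc, ← Matrix.mul_assoc, hR, Matrix.one_mul]
      _ = lam j • w j := h2
  -- cov X is symmetric
  have hcov_symm : (cov X)ᵀ = cov X := by
    unfold cov; rw [Matrix.transpose_mul, Matrix.transpose_transpose]
  -- orthogonality of w j against u m for m ≠ j
  have hperp : ∀ j m : Fin 3, m ≠ j → u m ⬝ᵥ w j = 0 := by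
    intro j m hmj
    have h1 : u m ⬝ᵥ (cov X *ᵥ w j) = lam j * (u m ⬝ᵥ w j) := by
      rw [hw_eig j, dotProduct_smul, smul_eq_mul]
    have h2 : u m ⬝ᵥ (cov X *ᵥ w j) = lam m * (u m ⬝ᵥ w j) := by
      rw [Matrix.dotProduct_mulVec, ← Matrix.mulVec_transpose, hcov_symm, heig m,
        smul_dotProduct, smul_eq_mul]
    have := h1.symm.trans h2
    have hne := hlam m j hmj
    by_contra h
    exact hne (mul_right_cancel₀ h this.symm)
  -- U has orthonormal columns u j, so U Uᵀ = 1 and u spans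
  set U : Matrix (Fin 3) (Fin 3) ℝ := Matrix.of fun i k => u k i with hU
  have hUtU : Uᵀ * U = 1 := by
    ext i j
    simpa [hU, Matrix.mul_apply, Matrix.one_apply, dotProduct] using hortho i j
  have hUUt : U * Uᵀ = 1 := mul_eq_one_comm.mp hUtU
  -- expansion of w j in the basis u
  have hexpand : ∀ j, w j = ∑ m, (u m ⬝ᵥ w j) • u m := by
    intro j
    have h1 : (U * Uᵀ) *ᵥ w j = w j := by rw [hUUt, Matrix.one_mulVec]
    funext i
    have h2 := congrFun h1 i
    rw [← h2]
    simp only [Matrix.mulVec, Matrix.mul_apply, dotProduct, hU, Matrix.of_apply,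
      Matrix.transpose_apply, Finset.sum_apply, Pi.smul_apply, smul_eq_mul,
      Finset.sum_mul]
    rw [Finset.sum_comm]
    refine Finset.sum_congr rfl fun m _ => Finset.sum_congr rfl fun k _ => by ring
  -- hence w j = c j • u j with c j = ±1
  set c : Fin 3 → ℝ := fun j => u j ⬝ᵥ w j with hc
  have hwj : ∀ j, w j = c j • u j := by
    intro j
    rw [hexpand j, Finset.sum_eq_single j]
    · intro m _ hmj; rw [hperp j m hmj, zero_smul]
    · intro h; exact absurd (Finset.mem_univ j) h
  have hcsq : ∀ j, c j * c j = 1 := by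
    intro j
    have h1 : w j ⬝ᵥ w j = 1 := by
      have h0 : w j ⬝ᵥ w j = (R *ᵥ w j) ⬝ᵥ v j := by
        rw [show w j ⬝ᵥ w j = w j ⬝ᵥ (Rᵀ *ᵥ v j) from rfl,
          Matrix.dotProduct_mulVec, Matrix.vecMul_transpose]
      rw [h0, ← hvw j, vortho j j, if_pos rfl]
    have h2 : w j ⬝ᵥ w j = c j * c j := by
      rw [hwj j]
      rw [smul_dotProduct, dotProduct_smul, hortho j j, if_pos rfl]
      simp
    rw [h2] at h1; exact h1
  have hcpm : ∀ j, c j = 1 ∨ c j = -1 := fun j => mul_self_eq_one_iff.mp (hcsq j)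
  -- signs
  set s : Fin 3 → Bool := fun j => decide (c j = 1) with hs
  have hcs : ∀ j, c j = signOf (s j) := by
    intro j
    rcases hcpm j with h | h <;> simp [hs, signOf, h] <;> norm_num
  -- the key matrix identity
  have hkey : ∀ ε : Fin 3 → Bool,
      signedU v ε = R * signedU u (fun j => ε j == s j) := by
    intro ε
    ext i j
    have hvj : v j = c j • (R *ᵥ u j) := by
      rw [hvw j, hwj j, Matrix.mulVec_smul]
    rw [Matrix.mul_apply]
    simp only [signedU, Matrix.of_apply, hvj, Pi.smul_apply, smul_eq_mul]
    rw [hcs j, ← signOf_mul]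
    simp only [Matrix.mulVec, dotProduct, Finset.mul_sum]
    exact Finset.sum_congr rfl fun k _ => by ring
  -- reindexing equivalence on signs
  have hinv : Function.Involutive (fun ε : Fin 3 → Bool => fun j => ε j == s j) := by
    intro ε; funext j; cases h : ε j <;> cases h' : s j <;> simp [h, h']
  set e : (Fin 3 → Bool) ≃ (Fin 3 → Bool) := Function.Involutive.toPerm _ hinv with he
  -- now compute
  unfold faEquiv
  rw [centered_transform hn, Matrix.smul_mul, Matrix.sum_mul]
  congr 1
  rw [← Equiv.sum_comp e (fun ε => Φ ((X - onesT (centroid X)) * signedU u ε)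
        * (signedU u ε)ᵀ * Rᵀ)]
  apply Finset.sum_congr rfl
  intro ε _
  have heε : e ε = fun j => ε j == s j := rfl
  have harg : (X - onesT (centroid X)) * Rᵀ * (R * signedU u (e ε))
      = (X - onesT (centroid X)) * signedU u (e ε) := by
    rw [Matrix.mul_assoc, ← Matrix.mul_assoc Rᵀ, hR, Matrix.one_mul]
  rw [hkey ε, ← heε, harg, Matrix.transpose_mul, ← Matrix.mul_assoc]
end
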